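/- There exist finite sets X_B, X_R ⊆ R^4 with conv(X_B) ∩ conv(X_R) ≠ ∅ such that no pair x_j, x_j' of points of X_R admits an obstacle in X_B, i.e., conv(X_B) ∩ conv({x_j, x_j'}) = ∅ for all x_j, x_j' ∈ X_R. A witness is X_B = {(1,1,0,0), (-2,1,0,0), (1,-2,0,0)} and X_R = {(0,0,1,1), (0,0,-2,1), (0,0,1,-2)}, for which conv(X_B) ∩ conv(X_R) = {(0,0,0,0)}. -/

import Mathlib

private lemma convex_coords (i j : Fin 4) :
    Convex ℝ {x : Fin 4 → ℝ | x i = 0 ∧ x j = 0} := by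
  intro x hx y hy a b ha hb hab
  obtain ⟨hx1, hx2⟩ := hx
  obtain ⟨hy1, hy2⟩ := hy
  constructor <;> simp [hx1, hx2, hy1, hy2]

private lemma hullB_sub :
    convexHull ℝ ({![1,1,0,0], ![-2,1,0,0], ![1,-2,0,0]} : Set (Fin 4 → ℝ)) ⊆
      {x | x 2 = 0 ∧ x 3 = 0} := by
  apply convexHull_min _ (convex_coords 2 3)
  rintro x (rfl | rfl | rfl) <;> constructor <;> norm_num [Matrix.cons_val_two, Matrix.cons_val_three]

private lemma hullR_sub :
    convexHull ℝ ({![0,0,1,1], ![0,0,-2,1], ![0,0,1,-2]} : Set (Fin 4 → ℝ)) ⊆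
      {x | x 0 = 0 ∧ x 1 = 0} := by
  apply convexHull_min _ (convex_coords 0 1)
  rintro x (rfl | rfl | rfl) <;> constructor <;> norm_num

private lemma zero_mem_hull3 (a b c : Fin 4 → ℝ)
    (h : (1/3 : ℝ) • a + (1/3 : ℝ) • b + (1/3 : ℝ) • c = 0) :
    (0 : Fin 4 → ℝ) ∈ convexHull ℝ ({a, b, c} : Set (Fin 4 → ℝ)) := by
  have hconv := convex_convexHull ℝ ({a, b, c} : Set (Fin 4 → ℝ))
  have ha : a ∈ convexHull ℝ ({a, b, c} : Set (Fin 4 → ℝ)) :=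
    subset_convexHull ℝ _ (by simp)
  have hb : b ∈ convexHull ℝ ({a, b, c} : Set (Fin 4 → ℝ)) :=
    subset_convexHull ℝ _ (by simp)
  have hc : c ∈ convexHull ℝ ({a, b, c} : Set (Fin 4 → ℝ)) :=
    subset_convexHull ℝ _ (by simp)
  have hm : (1/2 : ℝ) • b + (1/2 : ℝ) • c ∈ convexHull ℝ ({a, b, c} : Set (Fin 4 → ℝ)) :=
    hconv hb hc (by norm_num) (by norm_num) (by norm_num)
  have h0 : (1/3 : ℝ) • a + (2/3 : ℝ) • ((1/2 : ℝ) • b + (1/2 : ℝ) • c)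
      ∈ convexHull ℝ ({a, b, c} : Set (Fin 4 → ℝ)) :=
    hconv ha hm (by norm_num) (by norm_num) (by norm_num)
  have : (1/3 : ℝ) • a + (2/3 : ℝ) • ((1/2 : ℝ) • b + (1/2 : ℝ) • c) = 0 := by
    rw [smul_add, ← add_assoc, smul_smul, smul_smul] at *
    convert h using 3 <;> norm_num
  rwa [this] at h0

private lemma zero_mem_B :
    (0 : Fin 4 → ℝ) ∈ convexHull ℝ
      ({![1,1,0,0], ![-2,1,0,0], ![1,-2,0,0]} : Set (Fin 4 → ℝ)) := by
  apply zero_mem_hull3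
  funext i
  fin_cases i <;> norm_num

private lemma zero_mem_R :
    (0 : Fin 4 → ℝ) ∈ convexHull ℝ
      ({![0,0,1,1], ![0,0,-2,1], ![0,0,1,-2]} : Set (Fin 4 → ℝ)) := by
  apply zero_mem_hull3
  funext i
  fin_cases i <;> norm_num

private lemma zero_eq_vec : (![0,0,0,0] : Fin 4 → ℝ) = 0 := by
  funext i; fin_cases i <;> norm_num

private lemma no_zero_seg (y1 y2 : Fin 4 → ℝ)
    (hy1 : y1 ∈ ({![0,0,1,1], ![0,0,-2,1], ![0,0,1,-2]} : Set (Fin 4 → ℝ)))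
    (hy2 : y2 ∈ ({![0,0,1,1], ![0,0,-2,1], ![0,0,1,-2]} : Set (Fin 4 → ℝ))) :
    (0 : Fin 4 → ℝ) ∉ segment ℝ y1 y2 := by
  rintro ⟨a, b, ha, hb, hab, hsum⟩
  have h2 := congrFun hsum 2
  have h3 := congrFun hsum 3
  simp only [Set.mem_insert_iff, Set.mem_singleton_iff] at hy1 hy2
  rcases hy1 with rfl | rfl | rfl <;> rcases hy2 with rfl | rfl | rfl <;>
    simp only [Pi.add_apply, Pi.smul_apply, smul_eq_mul, Pi.zero_apply] at h2 h3 <;>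
    norm_num [Matrix.cons_val_two, Matrix.cons_val_three] at h2 h3 <;> linarith

/-- There exist finite sets in ℝ⁴ whose convex hulls intersect although no
pair of points of the second set admits an obstacle in the first set. -/
theorem stmt_10 :
    ∃ XB XR : Set (Fin 4 → ℝ),
      XB = {![1,1,0,0], ![-2,1,0,0], ![1,-2,0,0]} ∧
      XR = {![0,0,1,1], ![0,0,-2,1], ![0,0,1,-2]} ∧
      XB.Finite ∧ XR.Finite ∧
      convexHull ℝ XB ∩ convexHull ℝ XR = {![0,0,0,0]} ∧
      (convexHull ℝ XB ∩ convexHull ℝ XR).Nonempty ∧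
      ∀ y1 ∈ XR, ∀ y2 ∈ XR,
        convexHull ℝ XB ∩ convexHull ℝ ({y1, y2} : Set (Fin 4 → ℝ)) = ∅ := by
  refine ⟨_, _, rfl, rfl,
    (Set.finite_singleton _).insert _ |>.insert _,
    (Set.finite_singleton _).insert _ |>.insert _, ?_, ?_, ?_⟩
  · apply Set.eq_singleton_iff_unique_mem.mpr
    constructor
    · rw [zero_eq_vec]; exact ⟨zero_mem_B, zero_mem_R⟩
    · rintro x ⟨hxB, hxR⟩
      obtain ⟨h2, h3⟩ := hullB_sub hxB
      obtain ⟨h0, h1⟩ := hullR_sub hxR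
      funext i
      fin_cases i <;> simp [h0, h1, h2, h3]
  · refine ⟨0, zero_mem_B, zero_mem_R⟩
  · intro y1 hy1 y2 hy2
    rw [Set.eq_empty_iff_forall_notMem]
    rintro x ⟨hxB, hxS⟩
    have hsub : ({y1, y2} : Set (Fin 4 → ℝ)) ⊆
        ({![0,0,1,1], ![0,0,-2,1], ![0,0,1,-2]} : Set (Fin 4 → ℝ)) := by
      rintro z (rfl | rfl) <;> assumption
    have hxR := convexHull_mono hsub hxS
    obtain ⟨h2, h3⟩ := hullB_sub hxB
    obtain ⟨h0, h1⟩ := hullR_sub hxR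
    have hx0 : x = 0 := by funext i; fin_cases i <;> simp [h0, h1, h2, h3]
    rw [convexHull_pair] at hxS
    exact no_zero_seg y1 y2 hy1 hy2 (hx0 ▸ hxS)
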